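/- Let S ⊂ Γ(TΩ) × ([0,∞)^ν \ {0}) be such that for every M the set {(X,d) ∈ S : |d|_∞ ≤ M} is finite, and suppose that for each 1 ≤ μ ≤ ν the collection {X : (X,d) ∈ S and d_{μ′} = 0 for all μ′ ≠ μ} satisfies Hörmander's condition on Ω. Then L(S), the closure of S under the operation ((X_1,d_1),(X_2,d_2)) ↦ ([X_1,X_2], d_1+d_2), is smoothly finitely generated on Ω′: there is a finite set F ⊂ L(S), namely F = {(X,d) ∈ L(S) : |d|_∞ ≤ M} for suitable M, which smoothly controls L(S) on Ω′ and is smoothly controlled by L(S). -/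

import Mathlib

open MeasureTheory
open scoped BigOperators Classical

noncomputable section

/-- Points of `ℝ^m`. -/
abbrev Pt (m : ℕ) := Fin m → ℝ

/-- Vector fields on `ℝ^n` (defined on all of `ℝ^n`; smoothness on the relevant open set
is imposed as a hypothesis where needed). -/
abbrev VF (n : ℕ) := Pt n → Pt n

/-- First-order partial derivative in the `j`-th coordinate direction. -/
noncomputable def pdv {m : ℕ} {E : Type*} [NormedAddCommGroup E] [NormedSpace ℝ E]
    (j : Fin m) (f : Pt m → E) : Pt m → E :=
  fun x => fderiv ℝ f x (Pi.single j 1)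

/-- Iterated partial derivative `∂^α`. -/
noncomputable def md {m : ℕ} {E : Type*} [NormedAddCommGroup E] [NormedSpace ℝ E]
    (α : Fin m → ℕ) (f : Pt m → E) : Pt m → E :=
  (List.finRange m).foldr (fun j g => (pdv j)^[α j] g) f

/-- `δ^d = ∏_μ δ_μ^{d_μ}` (real exponents). -/
noncomputable def dpow {ν : ℕ} (δ d : Fin ν → ℝ) : ℝ := ∏ μ, (δ μ) ^ (d μ)

/-- The unit cube `[0,1]^ν` of multi-parameter radii. -/
def unitCube (ν : ℕ) : Set (Fin ν → ℝ) := {δ | ∀ μ, 0 ≤ δ μ ∧ δ μ ≤ 1}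

/-- `d ∈ 𝔡_ν`: the degree `d` is nonzero in precisely one component. -/
def InD {ν : ℕ} (d : Fin ν → ℝ) : Prop :=
  ∃ μ, d μ ≠ 0 ∧ ∀ μ', μ' ≠ μ → d μ' = 0

/-- Lie bracket of vector fields. -/
noncomputable def vbracket {n : ℕ} (V W : VF n) : VF n :=
  fun x => fderiv ℝ W x (V x) - fderiv ℝ V x (W x)

/-- The unit-scale Carnot–Carathéodory ball of the finite family `Z` centred at `x₀`. -/
def CCBall {n q : ℕ} (Z : Fin q → VF n) (x₀ : Pt n) : Set (Pt n) :=
  {y | ∃ γ : ℝ → Pt n, ∃ a : Fin q → ℝ → ℝ,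
    γ 0 = x₀ ∧ γ 1 = y ∧ (∀ t : ℝ, (∑ j, (a j t) ^ 2) < 1) ∧
    IntervalIntegrable (fun s => ∑ j, a j s • Z j (γ s)) volume 0 1 ∧
    ∀ t ∈ Set.Icc (0 : ℝ) 1,
      γ t = x₀ + ∫ s in (0 : ℝ)..t, ∑ j, a j s • Z j (γ s)}

/-- The multi-parameter Carnot–Carathéodory ball `B_{(X,d)}(x₀,δ)`. -/
def MBall {n ν q : ℕ} (X : Fin q → VF n) (d : Fin q → Fin ν → ℝ)
    (x₀ : Pt n) (δ : Fin ν → ℝ) : Set (Pt n) :=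
  CCBall (fun j x => dpow δ (d j) • X j x) x₀

/-- Derivative of a function along a vector field. -/
noncomputable def vfD {n : ℕ} (V : VF n) (f : Pt n → ℝ) : Pt n → ℝ :=
  fun x => fderiv ℝ f x (V x)

/-- Iterated derivative along a list of vector fields. -/
noncomputable def listD {n : ℕ} (Vs : List (VF n)) (f : Pt n → ℝ) : Pt n → ℝ :=
  Vs.foldr vfD f

/-- `(X,d)` controls `(X₀,h)` on `Ω'`:  there is `τ > 0` so that for every `δ ∈ [0,1]^ν`
and `x ∈ Ω'` one can write `h(δ)·X₀ = Σ_j c_j δ^{d_j} X_j` on `B_{(X,d)}(x, τδ)` with all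
iterated `(δX)`-derivatives of the coefficients uniformly bounded. -/
def ControlsH {n ν q : ℕ} (X : Fin q → VF n) (d : Fin q → Fin ν → ℝ)
    (X₀ : VF n) (h : (Fin ν → ℝ) → ℝ) (Ω' : Set (Pt n)) : Prop :=
  ∃ τ : ℝ, 0 < τ ∧ ∃ c : (Fin ν → ℝ) → Pt n → Fin q → Pt n → ℝ,
    (∀ δ ∈ unitCube ν, ∀ x ∈ Ω',
      (∀ j, ContinuousOn (c δ x j) (MBall X d x (fun μ => τ * δ μ))) ∧
      ∀ y ∈ MBall X d x (fun μ => τ * δ μ),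
        h δ • X₀ y = ∑ j, c δ x j y • (dpow δ (d j) • X j y)) ∧
    (∀ m : ℕ, ∃ C : ℝ, ∀ δ ∈ unitCube ν, ∀ x ∈ Ω', ∀ j, ∀ L : List (Fin q),
      L.length ≤ m → ∀ y ∈ MBall X d x (fun μ => τ * δ μ),
        |listD (L.map (fun i z => dpow δ (d i) • X i z)) (c δ x j) y| ≤ C)

/-- `(X,d)` controls the pair `(X₀,d₀)` on `Ω'`. -/
def ControlsPair {n ν q : ℕ} (X : Fin q → VF n) (d : Fin q → Fin ν → ℝ)
    (p : VF n × (Fin ν → ℝ)) (Ω' : Set (Pt n)) : Prop :=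
  ControlsH X d p.1 (fun δ => dpow δ p.2) Ω'

/-- `(X,d)` smoothly controls `(X₀,h)` on `Ω'` (relative to the ambient open set `Ω`). -/
def SmoothControlsH {n ν q : ℕ} (X : Fin q → VF n) (d : Fin q → Fin ν → ℝ)
    (X₀ : VF n) (h : (Fin ν → ℝ) → ℝ) (Ω' Ω : Set (Pt n)) : Prop :=
  ∃ Ω'' : Set (Pt n), IsOpen Ω'' ∧ closure Ω' ⊆ Ω'' ∧ closure Ω'' ⊆ Ω ∧
    ∃ c : (Fin ν → ℝ) → Fin q → Pt n → ℝ,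
      (∀ δ ∈ unitCube ν, ∀ j, ContDiffOn ℝ (⊤ : ℕ∞) (c δ j) Ω'') ∧
      (∀ δ ∈ unitCube ν, ∀ y ∈ Ω'',
        h δ • X₀ y = ∑ j, c δ j y • (dpow δ (d j) • X j y)) ∧
      (∀ α : Fin n → ℕ, ∃ C : ℝ, ∀ δ ∈ unitCube ν, ∀ j, ∀ y ∈ Ω'',
        |md α (c δ j) y| ≤ C)

/-- `(X,d)` smoothly controls the pair `(X₀,d₀)` on `Ω'`. -/
def SmoothControlsPair {n ν q : ℕ} (X : Fin q → VF n) (d : Fin q → Fin ν → ℝ)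
    (p : VF n × (Fin ν → ℝ)) (Ω' Ω : Set (Pt n)) : Prop :=
  SmoothControlsH X d p.1 (fun δ => dpow δ p.2) Ω' Ω

/-- A (possibly infinite) set `S` controls a pair: some finite subfamily of `S` does. -/
def SetControlsPair {n ν : ℕ} (S : Set (VF n × (Fin ν → ℝ)))
    (p : VF n × (Fin ν → ℝ)) (Ω' : Set (Pt n)) : Prop :=
  ∃ q : ℕ, ∃ X : Fin q → VF n, ∃ d : Fin q → Fin ν → ℝ,
    (∀ j, (X j, d j) ∈ S) ∧ ControlsPair X d p Ω'

def SetSmoothControlsPair {n ν : ℕ} (S : Set (VF n × (Fin ν → ℝ)))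
    (p : VF n × (Fin ν → ℝ)) (Ω' Ω : Set (Pt n)) : Prop :=
  ∃ q : ℕ, ∃ X : Fin q → VF n, ∃ d : Fin q → Fin ν → ℝ,
    (∀ j, (X j, d j) ∈ S) ∧ SmoothControlsPair X d p Ω' Ω

def SetControlsSet {n ν : ℕ} (S T : Set (VF n × (Fin ν → ℝ)))
    (Ω' : Set (Pt n)) : Prop :=
  ∀ p ∈ T, SetControlsPair S p Ω'

def SetSmoothControlsSet {n ν : ℕ} (S T : Set (VF n × (Fin ν → ℝ)))
    (Ω' Ω : Set (Pt n)) : Prop :=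
  ∀ p ∈ T, SetSmoothControlsPair S p Ω' Ω

/-- `S` and `T` are equivalent on `Ω'`: each controls the other. -/
def EquivSets {n ν : ℕ} (S T : Set (VF n × (Fin ν → ℝ))) (Ω' : Set (Pt n)) : Prop :=
  SetControlsSet S T Ω' ∧ SetControlsSet T S Ω'

def EquivSetsS {n ν : ℕ} (S T : Set (VF n × (Fin ν → ℝ))) (Ω' Ω : Set (Pt n)) : Prop :=
  SetSmoothControlsSet S T Ω' Ω ∧ SetSmoothControlsSet T S Ω' Ω

/-- The Lie-bracket generated set `L(S)` as an inductive predicate. -/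
inductive genLie {n ν : ℕ} (S : Set (VF n × (Fin ν → ℝ))) :
    VF n × (Fin ν → ℝ) → Prop
  | base (p : VF n × (Fin ν → ℝ)) : p ∈ S → genLie S p
  | br (p q : VF n × (Fin ν → ℝ)) : genLie S p → genLie S q →
      genLie S (vbracket p.1 q.1, p.2 + q.2)

/-- `L(S)`: the smallest set containing `S` closed under `([X₁,X₂], d₁+d₂)`. -/
def LSet {n ν : ℕ} (S : Set (VF n × (Fin ν → ℝ))) : Set (VF n × (Fin ν → ℝ)) :=
  {p | genLie S p}

/-- Membership in the Lie algebra generated by a set of vector fields. -/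
inductive lieGen {n : ℕ} (V : Set (VF n)) : VF n → Prop
  | base (X : VF n) : X ∈ V → lieGen V X
  | br (X Y : VF n) : lieGen V X → lieGen V Y → lieGen V (vbracket X Y)

/-- Hörmander's condition for `V` on `U`: the Lie algebra generated by `V` spans the
tangent space at every point of `U`. -/
def Hormander {n : ℕ} (V : Set (VF n)) (U : Set (Pt n)) : Prop :=
  ∀ x ∈ U, Submodule.span ℝ {v : Pt n | ∃ X, lieGen V X ∧ v = X x} = ⊤

/-- Brackets of depth at most `m` (so `LD S m` corresponds to the paper's `L_{m+1}(S)`). -/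
inductive genLieD {n ν : ℕ} (S : Set (VF n × (Fin ν → ℝ))) :
    ℕ → VF n × (Fin ν → ℝ) → Prop
  | base (p : VF n × (Fin ν → ℝ)) : p ∈ S → genLieD S 0 p
  | mono (m : ℕ) (p : VF n × (Fin ν → ℝ)) : genLieD S m p → genLieD S (m + 1) p
  | br (k l : ℕ) (p q : VF n × (Fin ν → ℝ)) : genLieD S k p → genLieD S l q →
      genLieD S (k + l + 1) (vbracket p.1 q.1, p.2 + q.2)

def LD {n ν : ℕ} (S : Set (VF n × (Fin ν → ℝ))) (m : ℕ) :
    Set (VF n × (Fin ν → ℝ)) :=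
  {p | genLieD S m p}

/-- `π_μ S`: the elements of `S` whose degree is nonzero only in the `μ`-th component. -/
def piMu {n ν : ℕ} (μ : Fin ν) (S : Set (VF n × (Fin ν → ℝ))) :
    Set (VF n × (Fin ν → ℝ)) :=
  {p ∈ S | ∀ μ', μ' ≠ μ → p.2 μ' = 0}

/-- `σ_K S`: the elements of `S` of degree `|d|₁ ≤ K`. -/
def sigmaK {n ν : ℕ} (K : ℝ) (S : Set (VF n × (Fin ν → ℝ))) :
    Set (VF n × (Fin ν → ℝ)) :=
  {p ∈ S | (∑ μ, |p.2 μ|) ≤ K}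

/-- The multi-parameter dilation `δ t` on `ℝ^N` with exponents `e`. -/
noncomputable def dilVec {N ν : ℕ} (e : Fin N → Fin ν → ℝ) (δ : Fin ν → ℝ)
    (t : Pt N) : Pt N :=
  fun k => dpow δ (e k) * t k

/-- `(X,d)` controls the vector field parameterization `(W,e,N)` on `Ω'`. -/
def ControlsParamH {n ν q N : ℕ} (X : Fin q → VF n) (d : Fin q → Fin ν → ℝ)
    (W : Pt N → VF n) (e : Fin N → Fin ν → ℝ) (Ω' : Set (Pt n)) : Prop :=
  ∃ τ : ℝ, 0 < τ ∧ ∃ ρ₁ : ℝ, 0 < ρ₁ ∧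
    ∃ c : (Fin ν → ℝ) → Pt n → Fin q → Pt N → Pt n → ℝ,
      (∀ δ ∈ unitCube ν, ∀ x₀ ∈ Ω', ∀ t : Pt N, ‖t‖ < ρ₁ →
        ∀ x ∈ MBall X d x₀ (fun μ => τ * δ μ),
          W (dilVec e δ t) x = ∑ j, c δ x₀ j t x • (dpow δ (d j) • X j x)) ∧
      (∀ m : ℕ, ∃ C : ℝ, ∀ δ ∈ unitCube ν, ∀ x₀ ∈ Ω', ∀ j, ∀ L : List (Fin q),
        ∀ β : Fin N → ℕ, L.length + (∑ k, β k) ≤ m → ∀ t : Pt N, ‖t‖ < ρ₁ →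
          ∀ x ∈ MBall X d x₀ (fun μ => τ * δ μ),
            |listD (L.map (fun i z => dpow δ (d i) • X i z))
              (fun z => md β (fun t' => c δ x₀ j t' z) t) x| ≤ C)

/-- `(X,d)` smoothly controls the vector field parameterization `(W,e,N)` on `Ω'`. -/
def SmoothControlsParamH {n ν q N : ℕ} (X : Fin q → VF n) (d : Fin q → Fin ν → ℝ)
    (W : Pt N → VF n) (e : Fin N → Fin ν → ℝ) (Ω' Ω : Set (Pt n)) : Prop :=
  ∃ Ω'' : Set (Pt n), IsOpen Ω'' ∧ closure Ω' ⊆ Ω'' ∧ closure Ω'' ⊆ Ω ∧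
  ∃ ρ₁ : ℝ, 0 < ρ₁ ∧
  ∃ c : (Fin ν → ℝ) → Fin q → Pt N → Pt n → ℝ,
    (∀ δ ∈ unitCube ν, ∀ j, ContDiffOn ℝ (⊤ : ℕ∞)
      (fun p : Pt N × Pt n => c δ j p.1 p.2) (Metric.ball 0 ρ₁ ×ˢ Ω'')) ∧
    (∀ δ ∈ unitCube ν, ∀ t : Pt N, ‖t‖ < ρ₁ → ∀ y ∈ Ω'',
      W (dilVec e δ t) y = ∑ j, c δ j t y • (dpow δ (d j) • X j y)) ∧
    (∀ α : Fin n → ℕ, ∀ β : Fin N → ℕ, ∃ C : ℝ, ∀ δ ∈ unitCube ν, ∀ j,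
      ∀ t : Pt N, ‖t‖ < ρ₁ → ∀ y ∈ Ω'',
        |md α (fun z => md β (fun t' => c δ j t' z) t) y| ≤ C)

def SetControlsParam {n ν N : ℕ} (S : Set (VF n × (Fin ν → ℝ)))
    (W : Pt N → VF n) (e : Fin N → Fin ν → ℝ) (Ω' : Set (Pt n)) : Prop :=
  ∃ q : ℕ, ∃ X : Fin q → VF n, ∃ d : Fin q → Fin ν → ℝ,
    (∀ j, (X j, d j) ∈ S) ∧ ControlsParamH X d W e Ω'

def SetSmoothControlsParam {n ν N : ℕ} (S : Set (VF n × (Fin ν → ℝ)))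
    (W : Pt N → VF n) (e : Fin N → Fin ν → ℝ) (Ω' Ω : Set (Pt n)) : Prop :=
  ∃ q : ℕ, ∃ X : Fin q → VF n, ∃ d : Fin q → Fin ν → ℝ,
    (∀ j, (X j, d j) ∈ S) ∧ SmoothControlsParamH X d W e Ω' Ω

/-- `α! = ∏ (α_k)!`. -/
def mfact {N : ℕ} (α : Fin N → ℕ) : ℝ := ∏ k, (Nat.factorial (α k) : ℝ)

/-- The Taylor coefficient `X_α` of `W(t) ~ Σ_{|α|>0} t^α X_α`. -/
noncomputable def taylorC {n N : ℕ} (W : Pt N → VF n) (α : Fin N → ℕ) : VF n :=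
  fun x => (mfact α)⁻¹ • md α (fun t => W t x) 0

/-- `deg(α) = Σ_k α_k e_k`. -/
def degA {N ν : ℕ} (e : Fin N → Fin ν → ℝ) (α : Fin N → ℕ) : Fin ν → ℝ :=
  fun μ => ∑ k, (α k : ℝ) * e k μ

/-- The set `𝒮 = {(X_α, deg α) : deg α ∈ 𝔡_ν}` of a vector field parameterization. -/
def TaylorS {n N ν : ℕ} (W : Pt N → VF n) (e : Fin N → Fin ν → ℝ) :
    Set (VF n × (Fin ν → ℝ)) :=
  {p | ∃ α : Fin N → ℕ, α ≠ 0 ∧ InD (degA e α) ∧ p = (taylorC W α, degA e α)}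

/-- The set `𝒱 = {(X_α, deg α) : |α| > 0}` of a vector field parameterization. -/
def TaylorV {n N ν : ℕ} (W : Pt N → VF n) (e : Fin N → Fin ν → ℝ) :
    Set (VF n × (Fin ν → ℝ)) :=
  {p | ∃ α : Fin N → ℕ, α ≠ 0 ∧ p = (taylorC W α, degA e α)}

/-- `𝓕₀ = {(X_α, deg α) : deg α ∈ 𝔡_ν, |α| = 1}`: the first-order Taylor coefficients. -/
def TaylorF0 {n N ν : ℕ} (W : Pt N → VF n) (e : Fin N → Fin ν → ℝ) :
    Set (VF n × (Fin ν → ℝ)) :=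
  {p | ∃ α : Fin N → ℕ, (∑ k, α k) = 1 ∧ InD (degA e α) ∧
    p = (taylorC W α, degA e α)}

/-- `T` is finitely generated by `F` on `Ω'`. -/
def SetFinGenBy {n ν : ℕ} (T F : Set (VF n × (Fin ν → ℝ))) (Ω' : Set (Pt n)) : Prop :=
  F.Finite ∧ EquivSets F T Ω'

def SetFinGen {n ν : ℕ} (T : Set (VF n × (Fin ν → ℝ))) (Ω' : Set (Pt n)) : Prop :=
  ∃ F, SetFinGenBy T F Ω'

def SetSmoothFinGenBy {n ν : ℕ} (T F : Set (VF n × (Fin ν → ℝ)))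
    (Ω' Ω : Set (Pt n)) : Prop :=
  F.Finite ∧ EquivSetsS F T Ω' Ω

def SetSmoothFinGen {n ν : ℕ} (T : Set (VF n × (Fin ν → ℝ)))
    (Ω' Ω : Set (Pt n)) : Prop :=
  ∃ F, SetSmoothFinGenBy T F Ω' Ω

def SetLinFinGen {n ν : ℕ} (T : Set (VF n × (Fin ν → ℝ))) (Ω' : Set (Pt n)) : Prop :=
  ∃ F, (∀ p ∈ F, InD p.2) ∧ SetFinGenBy T F Ω'

def SetSmoothLinFinGen {n ν : ℕ} (T : Set (VF n × (Fin ν → ℝ)))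
    (Ω' Ω : Set (Pt n)) : Prop :=
  ∃ F, (∀ p ∈ F, InD p.2) ∧ SetSmoothFinGenBy T F Ω' Ω

/-- `(W,e,N)` is finitely generated by `F` on `Ω'`. -/
def ParamFinGenBy {n ν N : ℕ} (W : Pt N → VF n) (e : Fin N → Fin ν → ℝ)
    (F : Set (VF n × (Fin ν → ℝ))) (Ω' : Set (Pt n)) : Prop :=
  SetControlsParam (LSet (TaylorS W e)) W e Ω' ∧ SetFinGenBy (LSet (TaylorS W e)) F Ω'

def ParamFinGen {n ν N : ℕ} (W : Pt N → VF n) (e : Fin N → Fin ν → ℝ)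
    (Ω' : Set (Pt n)) : Prop :=
  SetControlsParam (LSet (TaylorS W e)) W e Ω' ∧ SetFinGen (LSet (TaylorS W e)) Ω'

def ParamSmoothFinGenBy {n ν N : ℕ} (W : Pt N → VF n) (e : Fin N → Fin ν → ℝ)
    (F : Set (VF n × (Fin ν → ℝ))) (Ω' Ω : Set (Pt n)) : Prop :=
  SetSmoothControlsParam (LSet (TaylorS W e)) W e Ω' Ω ∧
    SetSmoothFinGenBy (LSet (TaylorS W e)) F Ω' Ω

def ParamSmoothFinGen {n ν N : ℕ} (W : Pt N → VF n) (e : Fin N → Fin ν → ℝ)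
    (Ω' Ω : Set (Pt n)) : Prop :=
  SetSmoothControlsParam (LSet (TaylorS W e)) W e Ω' Ω ∧
    SetSmoothFinGen (LSet (TaylorS W e)) Ω' Ω

/-- `F` satisfies `𝒟(Ω')`: it controls all brackets of its own elements. -/
def DCondSet {n ν : ℕ} (F : Set (VF n × (Fin ν → ℝ))) (Ω' : Set (Pt n)) : Prop :=
  ∀ p ∈ F, ∀ p' ∈ F, SetControlsPair F (vbracket p.1 p'.1, p.2 + p'.2) Ω'

/-- `F` satisfies `𝒟_s(Ω')`: it smoothly controls all brackets of its own elements. -/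
def DsCondSet {n ν : ℕ} (F : Set (VF n × (Fin ν → ℝ))) (Ω' Ω : Set (Pt n)) : Prop :=
  ∀ p ∈ F, ∀ p' ∈ F, SetSmoothControlsPair F (vbracket p.1 p'.1, p.2 + p'.2) Ω' Ω

/-- `(W,e,N)` is linearly finitely generated by `F` on `Ω'`. -/
def ParamLinFinGenBy {n ν N : ℕ} (W : Pt N → VF n) (e : Fin N → Fin ν → ℝ)
    (F : Set (VF n × (Fin ν → ℝ))) (Ω' : Set (Pt n)) : Prop :=
  DCondSet (TaylorF0 W e) Ω' ∧ SetControlsParam (TaylorF0 W e) W e Ω' ∧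
    EquivSets (TaylorF0 W e) F Ω'

/-- `(W,e,N)` is smoothly linearly finitely generated by `F` on `Ω'`. -/
def ParamSmoothLinFinGenBy {n ν N : ℕ} (W : Pt N → VF n) (e : Fin N → Fin ν → ℝ)
    (F : Set (VF n × (Fin ν → ℝ))) (Ω' Ω : Set (Pt n)) : Prop :=
  DsCondSet (TaylorF0 W e) Ω' Ω ∧ SetSmoothControlsParam (TaylorF0 W e) W e Ω' Ω ∧
    EquivSetsS (TaylorF0 W e) F Ω' Ω


section AuxMd

variable {m : ℕ} {U : Set (Pt m)}

lemma contDiffOn_pdv (hU : IsOpen U) {f : Pt m → ℝ}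
    (hf : ContDiffOn ℝ (⊤:ℕ∞) f U) (j : Fin m) :
    ContDiffOn ℝ (⊤:ℕ∞) (pdv j f) U :=
  (hf.fderiv_of_isOpen hU (by simp)).clm_apply contDiffOn_const

lemma contDiffOn_pdv_iter (hU : IsOpen U) {f : Pt m → ℝ}
    (hf : ContDiffOn ℝ (⊤:ℕ∞) f U) (j : Fin m) (k : ℕ) :
    ContDiffOn ℝ (⊤:ℕ∞) ((pdv j)^[k] f) U := by
  induction k generalizing f with
  | zero => exact hf
  | succ k ih =>
    rw [Function.iterate_succ_apply]
    exact ih (contDiffOn_pdv hU hf j)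

lemma contDiffOn_foldr (hU : IsOpen U) (α : Fin m → ℕ) (L : List (Fin m))
    {f : Pt m → ℝ} (hf : ContDiffOn ℝ (⊤:ℕ∞) f U) :
    ContDiffOn ℝ (⊤:ℕ∞) (L.foldr (fun j g => (pdv j)^[α j] g) f) U := by
  induction L with
  | nil => exact hf
  | cons j L ih => exact contDiffOn_pdv_iter hU ih j (α j)

lemma contDiffOn_md (hU : IsOpen U) {f : Pt m → ℝ}
    (hf : ContDiffOn ℝ (⊤:ℕ∞) f U) (α : Fin m → ℕ) :
    ContDiffOn ℝ (⊤:ℕ∞) (md α f) U :=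
  contDiffOn_foldr hU α _ hf

lemma pdv_congr_mul (hU : IsOpen U) {f g : Pt m → ℝ} {s : ℝ}
    (hf : ContDiffOn ℝ (⊤:ℕ∞) f U) (hg : ∀ y ∈ U, g y = s * f y) (j : Fin m) :
    ∀ y ∈ U, pdv j g y = s * pdv j f y := by
  intro y hy
  have hfd : DifferentiableAt ℝ f y :=
    (hf.contDiffAt (hU.mem_nhds hy)).differentiableAt (by simp)
  have he : g =ᶠ[nhds y] fun z => s * f z :=
    Filter.eventuallyEq_of_mem (hU.mem_nhds hy) hg
  simp only [pdv]
  rw [he.fderiv_eq, fderiv_const_mul hfd]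
  simp

lemma pdv_iter_congr_mul (hU : IsOpen U) {s : ℝ} (j : Fin m) (k : ℕ)
    {f g : Pt m → ℝ} (hf : ContDiffOn ℝ (⊤:ℕ∞) f U) (hg : ∀ y ∈ U, g y = s * f y) :
    ∀ y ∈ U, (pdv j)^[k] g y = s * (pdv j)^[k] f y := by
  induction k generalizing f g with
  | zero => exact hg
  | succ k ih =>
    rw [Function.iterate_succ_apply, Function.iterate_succ_apply]
    exact ih (contDiffOn_pdv hU hf j) (pdv_congr_mul hU hf hg j)

lemma foldr_congr_mul (hU : IsOpen U) {s : ℝ} (α : Fin m → ℕ) (L : List (Fin m))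
    {f g : Pt m → ℝ} (hf : ContDiffOn ℝ (⊤:ℕ∞) f U) (hg : ∀ y ∈ U, g y = s * f y) :
    ∀ y ∈ U, (L.foldr (fun j h => (pdv j)^[α j] h) g) y
      = s * (L.foldr (fun j h => (pdv j)^[α j] h) f) y := by
  induction L generalizing f g with
  | nil => exact hg
  | cons j L ih =>
    exact pdv_iter_congr_mul hU j (α j) (contDiffOn_foldr hU α L hf) (ih hf hg)

lemma md_congr_mul (hU : IsOpen U) {s : ℝ} (α : Fin m → ℕ)
    {f : Pt m → ℝ} (hf : ContDiffOn ℝ (⊤:ℕ∞) f U) :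
    ∀ y ∈ U, md α (fun z => s * f z) y = s * md α f y :=
  foldr_congr_mul hU α _ hf (fun _ _ => rfl)

lemma pdv_const (j : Fin m) (k : ℝ) : pdv j (fun _ : Pt m => k) = fun _ => 0 := by
  funext x
  simp [pdv]

lemma pdv_iter_zero (j : Fin m) (t : ℕ) :
    (pdv j)^[t] (fun _ : Pt m => (0:ℝ)) = fun _ => 0 := by
  induction t with
  | zero => rfl
  | succ t ih => rw [Function.iterate_succ_apply, pdv_const]; exact ih

lemma pdv_iter_const (j : Fin m) (k : ℝ) : ∀ t : ℕ,
    ((pdv j)^[t] (fun _ : Pt m => k) = fun _ => k) ∨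
    ((pdv j)^[t] (fun _ : Pt m => k) = fun _ => 0) := by
  intro t
  cases t with
  | zero => left; rfl
  | succ t =>
    right
    rw [Function.iterate_succ_apply, pdv_const]
    exact pdv_iter_zero j t

lemma foldr_const (α : Fin m → ℕ) (k : ℝ) : ∀ L : List (Fin m),
    (L.foldr (fun j g => (pdv j)^[α j] g) (fun _ : Pt m => k) = fun _ => k) ∨
    (L.foldr (fun j g => (pdv j)^[α j] g) (fun _ : Pt m => k) = fun _ => 0) := by
  intro L
  induction L with
  | nil => left; rfl
  | cons j L ih =>
    rcases ih with h | h <;> rw [List.foldr_cons, h]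
    · exact pdv_iter_const j k (α j)
    · right
      rcases pdv_iter_const j 0 (α j) with h' | h' <;> exact h'

lemma md_const_abs_le (α : Fin m → ℕ) (k : ℝ) (y : Pt m) :
    |md α (fun _ : Pt m => k) y| ≤ |k| := by
  rcases foldr_const α k (List.finRange m) with h | h <;>
    simp [md, h, abs_nonneg]

end AuxMd

section AuxGen

variable {n ν : ℕ}

lemma contDiffOn_vbracket {U : Set (Pt n)} (hU : IsOpen U) {V W : VF n}
    (hV : ContDiffOn ℝ (⊤:ℕ∞) V U) (hW : ContDiffOn ℝ (⊤:ℕ∞) W U) :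
    ContDiffOn ℝ (⊤:ℕ∞) (vbracket V W) U := by
  have h1 : ContDiffOn ℝ (⊤:ℕ∞) (fun x => fderiv ℝ W x (V x)) U :=
    (hW.fderiv_of_isOpen hU (by simp)).clm_apply hV
  have h2 : ContDiffOn ℝ (⊤:ℕ∞) (fun x => fderiv ℝ V x (W x)) U :=
    (hV.fderiv_of_isOpen hU (by simp)).clm_apply hW
  exact h1.sub h2

lemma genLie_fst_smooth {S : Set (VF n × (Fin ν → ℝ))} {U : Set (Pt n)} (hU : IsOpen U)
    (hS : ∀ p ∈ S, ContDiffOn ℝ (⊤:ℕ∞) p.1 U) {p} (hp : genLie S p) :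
    ContDiffOn ℝ (⊤:ℕ∞) p.1 U := by
  induction hp with
  | base p hp => exact hS p hp
  | br p q hp hq ihp ihq => exact contDiffOn_vbracket hU ihp ihq

lemma genLie_snd_nonneg {S : Set (VF n × (Fin ν → ℝ))}
    (hS : ∀ p ∈ S, ∀ μ, 0 ≤ p.2 μ) {p} (hp : genLie S p) :
    ∀ μ, 0 ≤ p.2 μ := by
  induction hp with
  | base p hp => exact hS p hp
  | br p q hp hq ihp ihq => exact fun μ => add_nonneg (ihp μ) (ihq μ)

lemma lieGen_exists {S : Set (VF n × (Fin ν → ℝ))} {μ : Fin ν} {X : VF n}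
    (h : lieGen {X : VF n | ∃ d, (X, d) ∈ S ∧ ∀ μ', μ' ≠ μ → d μ' = 0} X) :
    ∃ d, genLie S (X, d) ∧ ∀ μ', μ' ≠ μ → d μ' = 0 := by
  induction h with
  | base X hX =>
    obtain ⟨d, hd, h0⟩ := hX
    exact ⟨d, genLie.base _ hd, h0⟩
  | br X Y hX hY ihX ihY =>
    obtain ⟨d1, h1, s1⟩ := ihX
    obtain ⟨d2, h2, s2⟩ := ihY
    exact ⟨d1 + d2, genLie.br (X, d1) (Y, d2) h1 h2,
      fun μ' h => by simp [Pi.add_apply, s1 μ' h, s2 μ' h]⟩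

lemma exists_omega'' {K U : Set (Pt n)} (hK : IsCompact K) (hU : IsOpen U) (hKU : K ⊆ U) :
    ∃ W : Set (Pt n), IsOpen W ∧ K ⊆ W ∧ IsCompact (closure W) ∧ closure W ⊆ U := by
  obtain ⟨L, hL, hKL, hLU⟩ := exists_compact_between hK hU hKU
  refine ⟨interior L, isOpen_interior, hKL, ?_, ?_⟩
  · exact hL.of_isClosed_subset isClosed_closure
      ((closure_minimal interior_subset hL.isClosed))
  · exact (closure_minimal interior_subset hL.isClosed).trans hLU

/-! Finiteness of bounded pieces of `LSet S`. -/

lemma lset_bounded_finite {S : Set (VF n × (Fin ν → ℝ))}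
    (hreg : ∀ p ∈ S, ∀ μ, 0 ≤ p.2 μ) (hne : ∀ p ∈ S, p.2 ≠ 0)
    (hfin : ∀ M : ℝ, {p ∈ S | ∀ μ, |p.2 μ| ≤ M}.Finite) (M : ℝ) :
    {p ∈ LSet S | ∀ μ, |p.2 μ| ≤ M}.Finite := by
  classical
  set SM : Set (VF n × (Fin ν → ℝ)) := {p ∈ S | ∀ μ, |p.2 μ| ≤ M} with hSM
  have hSMfin : SM.Finite := hfin M
  set w : VF n × (Fin ν → ℝ) → ℝ := fun p => ∑ μ, p.2 μ with hw
  -- a positive lower bound for the weight of elements of SM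
  set εF : Finset ℝ := insert 1 (hSMfin.toFinset.image w) with hεF
  have hεne : εF.Nonempty := ⟨1, Finset.mem_insert_self _ _⟩
  set ε : ℝ := εF.min' hεne with hε
  have hεpos : 0 < ε := by
    rw [hε]
    apply (Finset.lt_min'_iff εF hεne).2
    intro y hy
    rcases Finset.mem_insert.1 hy with h | h
    · simpa [h] using one_pos
    · obtain ⟨p, hp, rfl⟩ := Finset.mem_image.1 h
      rw [Set.Finite.mem_toFinset] at hp
      obtain ⟨μ₀, hμ₀⟩ := Function.ne_iff.1 (hne p hp.1)
      refine Finset.sum_pos' (fun μ _ => hreg p hp.1 μ) ⟨μ₀, Finset.mem_univ _, ?_⟩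
      exact lt_of_le_of_ne (hreg p hp.1 μ₀) (by simpa using (Ne.symm hμ₀))
  have hεle : ∀ p ∈ SM, ε ≤ w p := by
    intro p hp
    apply Finset.min'_le
    exact Finset.mem_insert_of_mem (Finset.mem_image_of_mem w (hSMfin.mem_toFinset.2 hp))
  -- the hierarchy g
  set g : ℕ → Set (VF n × (Fin ν → ℝ)) := fun k => Nat.rec SM
    (fun _ A => A ∪ ((fun r : (VF n × (Fin ν → ℝ)) × (VF n × (Fin ν → ℝ)) =>
      (vbracket r.1.1 r.2.1, r.1.2 + r.2.2)) '' (A ×ˢ A))) k with hg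
  have hgfin : ∀ k, (g k).Finite := by
    intro k
    induction k with
    | zero => exact hSMfin
    | succ k ih => exact ih.union ((ih.prod ih).image _)
  have hgmono : ∀ k l, k ≤ l → g k ⊆ g l := by
    intro k l hkl
    induction hkl with
    | refl => exact subset_rfl
    | step _ ih => exact ih.trans Set.subset_union_left
  -- key induction
  have hnonneg : ∀ p, genLie S p → ∀ μ, 0 ≤ p.2 μ := fun p hp => genLie_snd_nonneg hreg hp
  have hwle : ∀ p, genLie S p → (∀ μ, |p.2 μ| ≤ M) → ε ≤ w p := by
    intro p hp
    induction hp with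
    | base p hp => exact fun hb => hεle p ⟨hp, hb⟩
    | br a b ha hb iha ihb =>
      intro hbd
      have hba : ∀ μ, |a.2 μ| ≤ M := by
        intro μ
        have h1 : a.2 μ + b.2 μ ≤ M := le_trans (le_abs_self _) (hbd μ)
        rw [abs_of_nonneg (hnonneg a ha μ)]
        linarith [hnonneg b hb μ]
      have h1 : ε ≤ w a := iha hba
      have h2 : 0 ≤ w b := Finset.sum_nonneg (fun μ _ => hnonneg b hb μ)
      have : w (vbracket a.1 b.1, a.2 + b.2) = w a + w b := by
        simp [hw, Finset.sum_add_distrib]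
      linarith
  have hmain : ∀ p, genLie S p → ∀ k : ℕ, (∀ μ, |p.2 μ| ≤ M) → w p ≤ ε * (k + 1) →
      p ∈ g k := by
    intro p hp
    induction hp with
    | base p hp =>
      intro k hbd _
      exact hgmono 0 k (Nat.zero_le k) ⟨hp, hbd⟩
    | br a b ha hb iha ihb =>
      intro k hbd hwk
      have hba : ∀ μ, |a.2 μ| ≤ M := by
        intro μ
        have h1 : a.2 μ + b.2 μ ≤ M := le_trans (le_abs_self _) (hbd μ)
        rw [abs_of_nonneg (hnonneg a ha μ)]
        linarith [hnonneg b hb μ]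
      have hbb : ∀ μ, |b.2 μ| ≤ M := by
        intro μ
        have h1 : a.2 μ + b.2 μ ≤ M := le_trans (le_abs_self _) (hbd μ)
        rw [abs_of_nonneg (hnonneg b hb μ)]
        linarith [hnonneg a ha μ]
      have hwa : ε ≤ w a := hwle a ha hba
      have hwb : ε ≤ w b := hwle b hb hbb
      have hsum : w (vbracket a.1 b.1, a.2 + b.2) = w a + w b := by
        simp [hw, Finset.sum_add_distrib]
      rcases k with _ | k
      · exfalso
        rw [hsum] at hwk
        push_cast at hwk
        linarith
      · have hka : w a ≤ ε * (k + 1) := by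
          rw [hsum] at hwk
          push_cast at hwk ⊢
          linarith
        have hkb : w b ≤ ε * (k + 1) := by
          rw [hsum] at hwk
          push_cast at hwk ⊢
          linarith
        have hga := iha k hba hka
        have hgb := ihb k hbb hkb
        exact Set.subset_union_right ⟨(a, b), Set.mk_mem_prod hga hgb, rfl⟩
  obtain ⟨K, hK⟩ := exists_nat_gt ((ν * M) / ε)
  have hK' : ν * M ≤ ε * (K + 1) := by
    rw [div_lt_iff₀ hεpos] at hK
    nlinarith
  apply (hgfin K).subset
  rintro p ⟨hp, hbd⟩
  refine hmain p hp K hbd ?_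
  calc w p ≤ ∑ μ : Fin ν, M := Finset.sum_le_sum
        (fun μ _ => le_trans (le_abs_self _) (hbd μ))
    _ = ν * M := by simp [mul_comm]
    _ ≤ ε * (K + 1) := hK'

end AuxGen

section AuxGram

open scoped Matrix

variable {n : ℕ}

/-- The Gram matrix of a finite family of vectors in `ℝ^n`. -/
def gramM {q : ℕ} (Y : Fin q → Pt n) : Matrix (Fin n) (Fin n) ℝ :=
  Matrix.of fun a b => ∑ i, Y i a * Y i b

lemma gram_quad {q : ℕ} (Y : Fin q → Pt n) (x : Pt n) :
    x ⬝ᵥ (gramM Y *ᵥ x) = ∑ i, (∑ a, Y i a * x a) ^ 2 := by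
  simp only [dotProduct, Matrix.mulVec, gramM, Matrix.of_apply, Finset.sum_mul,
    Finset.mul_sum, pow_two]
  conv_lhs => enter [2, y]; rw [Finset.sum_comm]
  rw [Finset.sum_comm]
  apply Finset.sum_congr rfl
  intro i _
  apply Finset.sum_congr rfl
  intro a _
  apply Finset.sum_congr rfl
  intro b _
  ring

lemma gram_posdef {q : ℕ} {Y : Fin q → Pt n}
    (hsp : Submodule.span ℝ (Set.range Y) = ⊤) : (gramM Y).PosDef := by
  rw [Matrix.posDef_iff_dotProduct_mulVec]
  constructor
  · ext a b
    simp [Matrix.conjTranspose_apply, gramM, mul_comm]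
  · intro x hx
    rw [star_trivial, gram_quad]
    have hnn : ∀ i ∈ Finset.univ, (0:ℝ) ≤ (∑ a, Y i a * x a) ^ 2 :=
      fun i _ => sq_nonneg _
    rcases eq_or_lt_of_le (Finset.sum_nonneg hnn) with h | h
    · exfalso
      apply hx
      have hall : ∀ i, (∑ a, Y i a * x a) = 0 := by
        intro i
        have := (Finset.sum_eq_zero_iff_of_nonneg hnn).1 h.symm i (Finset.mem_univ i)
        exact pow_eq_zero_iff (two_ne_zero) |>.1 this
      set φ : Pt n →ₗ[ℝ] ℝ :=
        { toFun := fun v => ∑ a, v a * x a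
          map_add' := by intro u v; simp [add_mul, Finset.sum_add_distrib]
          map_smul' := by intro c v; simp [Finset.mul_sum, mul_assoc] } with hφ
      have hker : Submodule.span ℝ (Set.range Y) ≤ LinearMap.ker φ := by
        rw [Submodule.span_le]
        rintro v ⟨i, rfl⟩
        exact hall i
      have hx0 : φ x = 0 := by
        have : x ∈ LinearMap.ker φ := hker (by rw [hsp]; trivial)
        exact this
      have : ∑ a, x a * x a = 0 := hx0
      funext a
      have := (Finset.sum_eq_zero_iff_of_nonneg
        (fun a _ => mul_self_nonneg (x a))).1 this a (Finset.mem_univ a)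
      exact mul_self_eq_zero.1 this
    · exact h

lemma gram_rep {q : ℕ} (Y : Fin q → Pt n) (v : Pt n) (hdet : (gramM Y).det ≠ 0) :
    v = ∑ i, ((gramM Y).det⁻¹ * ((fun a => Y i a) ⬝ᵥ ((gramM Y).adjugate *ᵥ v))) • Y i := by
  have hGw : gramM Y *ᵥ ((gramM Y).det⁻¹ • ((gramM Y).adjugate *ᵥ v)) = v := by
    rw [Matrix.mulVec_smul, Matrix.mulVec_mulVec, Matrix.mul_adjugate,
      Matrix.smul_mulVec, Matrix.one_mulVec, smul_smul,
      inv_mul_cancel₀ hdet, one_smul]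
  funext b
  conv_lhs => rw [← hGw]
  simp only [Matrix.mulVec, dotProduct, gramM, Matrix.of_apply, Pi.smul_apply,
    smul_eq_mul, Finset.sum_apply, Finset.sum_mul, Finset.mul_sum]
  conv_lhs => enter [2, y]; rw [Finset.sum_comm]
  rw [Finset.sum_comm]
  apply Finset.sum_congr rfl
  intro i _
  apply Finset.sum_congr rfl
  intro a _
  apply Finset.sum_congr rfl
  intro b _
  ring

lemma gram_span {q : ℕ} (Y : Fin q → Pt n) (hdet : (gramM Y).det ≠ 0) :
    Submodule.span ℝ (Set.range Y) = ⊤ := by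
  rw [eq_top_iff]
  intro v _
  rw [gram_rep Y v hdet]
  exact Submodule.sum_mem _
    (fun i _ => Submodule.smul_mem _ _ (Submodule.subset_span ⟨i, rfl⟩))

lemma contDiffOn_matrix_det {N : ℕ} {U : Set (Pt n)}
    {A : Pt n → Matrix (Fin N) (Fin N) ℝ}
    (hA : ∀ a b, ContDiffOn ℝ (⊤:ℕ∞) (fun y => A y a b) U) :
    ContDiffOn ℝ (⊤:ℕ∞) (fun y => (A y).det) U := by
  simp only [Matrix.det_apply]
  apply ContDiffOn.sum
  intro σ _
  have he : ∀ y : Pt n, (Equiv.Perm.sign σ • ∏ i, A y (σ i) i)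
      = ((Equiv.Perm.sign σ : ℤ) : ℝ) * ∏ i, A y (σ i) i := by
    intro y
    rw [Units.smul_def, zsmul_eq_mul]
  simp_rw [he]
  exact contDiffOn_const.mul (contDiffOn_prod (fun i _ => hA (σ i) i))

lemma contDiffOn_matrix_adjugate {N : ℕ} {U : Set (Pt n)}
    {A : Pt n → Matrix (Fin N) (Fin N) ℝ}
    (hA : ∀ a b, ContDiffOn ℝ (⊤:ℕ∞) (fun y => A y a b) U) (i j : Fin N) :
    ContDiffOn ℝ (⊤:ℕ∞) (fun y => (A y).adjugate i j) U := by
  simp only [Matrix.adjugate_apply]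
  apply contDiffOn_matrix_det
  intro a b
  by_cases h : a = j
  · simp only [Matrix.updateRow_apply, h, if_pos rfl]
    exact contDiffOn_const
  · simp only [Matrix.updateRow_apply, if_neg h]
    exact hA a b

lemma contDiffOn_gram_entries {q : ℕ} {U : Set (Pt n)} {Y : Fin q → VF n}
    (hY : ∀ i, ContDiffOn ℝ (⊤:ℕ∞) (Y i) U) (a b : Fin n) :
    ContDiffOn ℝ (⊤:ℕ∞) (fun y => gramM (fun i => Y i y) a b) U := by
  simp only [gramM, Matrix.of_apply]
  exact ContDiffOn.sum (fun i _ =>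
    ((contDiffOn_pi.mp (hY i)) a).mul ((contDiffOn_pi.mp (hY i)) b))

end AuxGram

section AuxSpan

open scoped Matrix

variable {n ν : ℕ}

lemma exists_spanning_family_pt {S : Set (VF n × (Fin ν → ℝ))} {Ω : Set (Pt n)}
    (μ : Fin ν)
    (hHor : Hormander {X : VF n | ∃ d, (X, d) ∈ S ∧ ∀ μ', μ' ≠ μ → d μ' = 0} Ω)
    (x : Pt n) (hx : x ∈ Ω) :
    ∃ (q : ℕ) (Y : Fin q → VF n) (d : Fin q → Fin ν → ℝ),
      (∀ i, genLie S (Y i, d i)) ∧ (∀ i, ∀ μ', μ' ≠ μ → d i μ' = 0) ∧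
      Submodule.span ℝ (Set.range (fun i => Y i x)) = ⊤ := by
  classical
  set V : Set (VF n) := {X : VF n | ∃ d, (X, d) ∈ S ∧ ∀ μ', μ' ≠ μ → d μ' = 0} with hV
  have hsp := hHor x hx
  have hb : ∀ b : Fin n, ∃ t : Finset (Pt n),
      ↑t ⊆ {v : Pt n | ∃ X, lieGen V X ∧ v = X x} ∧
      Pi.single b 1 ∈ Submodule.span ℝ (t : Set (Pt n)) := by
    intro b
    apply Submodule.mem_span_finite_of_mem_span
    rw [hsp]; trivial
  choose t ht hmem using hb
  set T : Finset (Pt n) := Finset.univ.biUnion t with hT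
  have hTsub : (T : Set (Pt n)) ⊆ {v : Pt n | ∃ X, lieGen V X ∧ v = X x} := by
    intro v hv
    obtain ⟨b, _, hvb⟩ := Finset.mem_biUnion.1 hv
    exact ht b hvb
  have hTspan : Submodule.span ℝ (T : Set (Pt n)) = ⊤ := by
    rw [eq_top_iff]
    intro v _
    have hv : v = ∑ b, (Pi.single b (v b) : Pt n) := (Finset.univ_sum_single v).symm
    rw [hv]
    apply Submodule.sum_mem
    intro b _
    have h1 : (Pi.single b (v b) : Pt n) = v b • (Pi.single b 1 : Pt n) := by
      funext a
      by_cases h : a = b <;> simp [Pi.single_apply, h]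
    rw [h1]
    refine Submodule.smul_mem _ _ ?_
    refine Submodule.span_mono ?_ (hmem b)
    intro w hw
    rw [Finset.coe_biUnion]
    exact Set.mem_biUnion (Finset.mem_coe.2 (Finset.mem_univ b)) hw
  have hXv : ∀ v : {v // v ∈ T}, ∃ X, lieGen V X ∧ (v : Pt n) = X x :=
    fun v => hTsub v.2
  choose Xf hXlie hXval using hXv
  have hdv : ∀ v : {v // v ∈ T}, ∃ d, genLie S (Xf v, d) ∧ ∀ μ', μ' ≠ μ → d μ' = 0 :=
    fun v => lieGen_exists (hXlie v)
  choose df hdgen hdsupp using hdv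
  set e : {v // v ∈ T} ≃ Fin T.card := T.equivFin with he
  refine ⟨T.card, fun i => Xf (e.symm i), fun i => df (e.symm i),
    fun i => hdgen _, fun i => hdsupp _, ?_⟩
  rw [eq_top_iff, ← hTspan]
  apply Submodule.span_mono
  intro v hv
  refine ⟨e ⟨v, hv⟩, ?_⟩
  simp only [Equiv.symm_apply_apply]
  exact (hXval ⟨v, hv⟩).symm

lemma exists_spanning_family {S : Set (VF n × (Fin ν → ℝ))} {Ω Ω' : Set (Pt n)}
    (hΩ : IsOpen Ω) (hcl : closure Ω' ⊆ Ω) (hcpt : IsCompact (closure Ω'))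
    (hreg : ∀ p ∈ S, ContDiffOn ℝ (⊤:ℕ∞) p.1 Ω) (μ : Fin ν)
    (hHor : Hormander {X : VF n | ∃ d, (X, d) ∈ S ∧ ∀ μ', μ' ≠ μ → d μ' = 0} Ω) :
    ∃ (q : ℕ) (Y : Fin q → VF n) (d : Fin q → Fin ν → ℝ) (U : Set (Pt n)),
      (∀ i, genLie S (Y i, d i)) ∧ (∀ i, ∀ μ', μ' ≠ μ → d i μ' = 0) ∧
      IsOpen U ∧ closure Ω' ⊆ U ∧ U ⊆ Ω ∧
      (∀ y ∈ U, Submodule.span ℝ (Set.range (fun i => Y i y)) = ⊤) := by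
  classical
  have hpt : ∀ x : ↥(closure Ω'),
      ∃ (q : ℕ) (Y : Fin q → VF n) (d : Fin q → Fin ν → ℝ),
      (∀ i, genLie S (Y i, d i)) ∧ (∀ i, ∀ μ', μ' ≠ μ → d i μ' = 0) ∧
      Submodule.span ℝ (Set.range (fun i => Y i (x : Pt n))) = ⊤ :=
    fun x => exists_spanning_family_pt μ hHor x (hcl x.2)
  choose q Y d hgen hsupp hspan using hpt
  have hYsm : ∀ (x : ↥(closure Ω')) (i : Fin (q x)), ContDiffOn ℝ (⊤:ℕ∞) (Y x i) Ω :=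
    fun x i => genLie_fst_smooth hΩ hreg (hgen x i)
  set V : ↥(closure Ω') → Set (Pt n) :=
    fun x => {y ∈ Ω | (gramM (fun i => Y x i y)).det ≠ 0} with hVdef
  have hdetc : ∀ x : ↥(closure Ω'),
      ContinuousOn (fun y => (gramM (fun i => Y x i y)).det) Ω := by
    intro x
    exact (contDiffOn_matrix_det (fun a b => contDiffOn_gram_entries (hYsm x) a b)).continuousOn
  have hVopen : ∀ x, IsOpen (V x) := by
    intro x
    have : V x = Ω ∩ (fun y => (gramM (fun i => Y x i y)).det) ⁻¹' ({0}ᶜ) := by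
      ext y; simp [hVdef, Set.mem_setOf_eq, And.comm]
    rw [this]
    exact ContinuousOn.isOpen_inter_preimage (hdetc x) hΩ isOpen_compl_singleton
  have hVmem : ∀ x : ↥(closure Ω'), (x : Pt n) ∈ V x := by
    intro x
    exact ⟨hcl x.2, (gram_posdef (hspan x)).det_pos.ne'⟩
  have hcov : closure Ω' ⊆ ⋃ x : ↥(closure Ω'), V x := by
    intro y hy
    exact Set.mem_iUnion.2 ⟨⟨y, hy⟩, hVmem ⟨y, hy⟩⟩
  obtain ⟨tt, htt⟩ := hcpt.elim_finite_subcover V hVopen hcov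
  set J := Σ l : {l : ↥(closure Ω') // l ∈ tt}, Fin (q l.1) with hJ
  set eJ : J ≃ Fin (Fintype.card J) := Fintype.equivFin J with heJ
  refine ⟨Fintype.card J, fun i => Y (eJ.symm i).1.1 (eJ.symm i).2,
    fun i => d (eJ.symm i).1.1 (eJ.symm i).2, ⋃ l ∈ tt, V l,
    fun i => hgen _ _, fun i => hsupp _ _,
    isOpen_biUnion (fun l _ => hVopen l), ?_, ?_, ?_⟩
  · intro y hy
    obtain ⟨l, hl⟩ := Set.mem_iUnion.1 (htt hy)
    obtain ⟨hlt, hyl⟩ := Set.mem_iUnion.1 hl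
    exact Set.mem_biUnion hlt hyl
  · intro y hy
    obtain ⟨l, _, hyl⟩ := Set.mem_iUnion₂.1 hy
    exact hyl.1
  · intro y hy
    obtain ⟨l, hlt, hyl⟩ := Set.mem_iUnion₂.1 hy
    have hsub := gram_span (fun i => Y l i y) hyl.2
    rw [eq_top_iff, ← hsub]
    apply Submodule.span_mono
    rintro v ⟨i, rfl⟩
    refine ⟨eJ ⟨⟨l, hlt⟩, i⟩, ?_⟩
    have hEq : eJ.symm (eJ ⟨⟨l, hlt⟩, i⟩) = ⟨⟨l, hlt⟩, i⟩ := Equiv.symm_apply_apply _ _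
    show Y ((eJ.symm (eJ ⟨⟨l, hlt⟩, i⟩)).fst : ↥(closure Ω')) (eJ.symm (eJ ⟨⟨l, hlt⟩, i⟩)).snd y
      = Y l i y
    rw [hEq]
end AuxSpan

section AuxCtl

variable {n ν : ℕ}

lemma dpow_nonneg {δ d : Fin ν → ℝ} (hδ : ∀ μ, 0 ≤ δ μ) : 0 ≤ dpow δ d :=
  Finset.prod_nonneg fun μ _ => Real.rpow_nonneg (hδ μ) _

lemma dpow_le_one {δ d : Fin ν → ℝ} (hδ : δ ∈ unitCube ν) (hd : ∀ μ, 0 ≤ d μ) :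
    dpow δ d ≤ 1 :=
  Finset.prod_le_one (fun μ _ => Real.rpow_nonneg (hδ μ).1 _)
    (fun μ _ => Real.rpow_le_one (hδ μ).1 (hδ μ).2 (hd μ))

lemma dpow_sub_mul {δ e f : Fin ν → ℝ} (hδ : ∀ μ, 0 ≤ δ μ) (he : ∀ μ, 0 ≤ e μ)
    (hef : ∀ μ, e μ ≤ f μ) : dpow δ (f - e) * dpow δ e = dpow δ f := by
  rw [dpow, dpow, dpow, ← Finset.prod_mul_distrib]
  apply Finset.prod_congr rfl
  intro μ _
  rw [← Real.rpow_add_of_nonneg (hδ μ) (by simp only [Pi.sub_apply]; linarith [hef μ]) (he μ)]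
  congr 1
  simp only [Pi.sub_apply]
  ring

lemma smoothControlsPair_self {Ω Ω' : Set (Pt n)} (hΩ : IsOpen Ω)
    (hcl : closure Ω' ⊆ Ω) (hcpt : IsCompact (closure Ω')) (p : VF n × (Fin ν → ℝ)) :
    SmoothControlsPair (fun _ : Fin 1 => p.1) (fun _ : Fin 1 => p.2) p Ω' Ω := by
  obtain ⟨W, hWopen, hclW, _, hWsub⟩ := exists_omega'' hcpt hΩ hcl
  refine ⟨W, hWopen, hclW, hWsub, fun _ _ _ => (1:ℝ), ?_, ?_, ?_⟩
  · intro δ _ j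
    exact contDiffOn_const
  · intro δ _ y _
    simp [Fin.sum_univ_one]
  · intro α
    refine ⟨1, fun δ _ j y _ => ?_⟩
    simpa using md_const_abs_le α 1 y

end AuxCtl

section AuxHigh

open scoped Matrix

variable {n ν : ℕ}

lemma smoothControls_high {Ω Ω' : Set (Pt n)} (hΩ : IsOpen Ω)
    {q : ℕ} {Y : Fin q → VF n} {dY : Fin q → Fin ν → ℝ} {U : Set (Pt n)}
    (hU : IsOpen U) (hclU : closure Ω' ⊆ U) (hUΩ : U ⊆ Ω)
    (hcpt : IsCompact (closure Ω'))
    (hYsm : ∀ i, ContDiffOn ℝ (⊤:ℕ∞) (Y i) U)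
    (hspan : ∀ y ∈ U, Submodule.span ℝ (Set.range (fun i => Y i y)) = ⊤)
    {X₀ : VF n} (hXsm : ContDiffOn ℝ (⊤:ℕ∞) X₀ U)
    {d₀ : Fin ν → ℝ} (hd0 : ∀ μ, 0 ≤ d₀ μ) (hdY0 : ∀ i μ, 0 ≤ dY i μ)
    (hle : ∀ i μ, dY i μ ≤ d₀ μ) :
    SmoothControlsPair Y dY (X₀, d₀) Ω' Ω := by
  classical
  set G : Pt n → Matrix (Fin n) (Fin n) ℝ := fun y => gramM (fun i => Y i y) with hG
  have hGent : ∀ a b, ContDiffOn ℝ (⊤:ℕ∞) (fun y => G y a b) U :=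
    fun a b => contDiffOn_gram_entries hYsm a b
  have hdet : ∀ y ∈ U, (G y).det ≠ 0 :=
    fun y hy => (gram_posdef (hspan y hy)).det_pos.ne'
  set a : Fin q → Pt n → ℝ := fun i y =>
    ((G y).det)⁻¹ * ∑ aa, Y i y aa * ∑ b, (G y).adjugate aa b * X₀ y b with ha
  have hasm : ∀ i, ContDiffOn ℝ (⊤:ℕ∞) (a i) U := by
    intro i
    refine ((contDiffOn_matrix_det hGent).inv hdet).mul ?_
    refine ContDiffOn.sum (fun aa _ => ((contDiffOn_pi.mp (hYsm i)) aa).mul ?_)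
    exact ContDiffOn.sum (fun b _ =>
      (contDiffOn_matrix_adjugate hGent aa b).mul ((contDiffOn_pi.mp hXsm) b))
  have hrep : ∀ y ∈ U, X₀ y = ∑ i, a i y • Y i y := by
    intro y hy
    have := gram_rep (fun i => Y i y) (X₀ y) (hdet y hy)
    rw [this]
    apply Finset.sum_congr rfl
    intro i _
    congr 1
  obtain ⟨W, hWopen, hclW, hWcpt, hWU⟩ := exists_omega'' hcpt hU hclU
  have hWsubU : W ⊆ U := subset_closure.trans hWU
  refine ⟨W, hWopen, hclW, hWU.trans hUΩ,
    fun δ i y => dpow δ (d₀ - dY i) * a i y, ?_, ?_, ?_⟩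
  · intro δ _ i
    exact (contDiffOn_const.mul (hasm i)).mono hWsubU
  · intro δ hδ y hy
    have hyU : y ∈ U := hWsubU hy
    show dpow δ d₀ • X₀ y
      = ∑ i, (dpow δ (d₀ - dY i) * a i y) • (dpow δ (dY i) • Y i y)
    rw [hrep y hyU, Finset.smul_sum]
    apply Finset.sum_congr rfl
    intro i _
    rw [smul_smul, smul_smul]
    congr 1
    rw [← dpow_sub_mul (fun μ => (hδ μ).1) (fun μ => hdY0 i μ) (fun μ => hle i μ)]
    ring
  · intro α
    have hbd : ∀ i : Fin q, ∃ C : ℝ, ∀ y ∈ closure W, ‖md α (a i) y‖ ≤ C := by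
      intro i
      exact hWcpt.exists_bound_of_continuousOn
        (((contDiffOn_md hU (hasm i) α).continuousOn).mono hWU)
    choose C hC using hbd
    refine ⟨∑ i, |C i|, ?_⟩
    intro δ hδ j y hy
    have hyU : y ∈ U := hWsubU hy
    have hmd : md α (fun z => dpow δ (d₀ - dY j) * a j z) y
        = dpow δ (d₀ - dY j) * md α (a j) y :=
      md_congr_mul hU α (hasm j) y hyU
    rw [hmd, abs_mul]
    have h1 : |dpow δ (d₀ - dY j)| ≤ 1 := by
      rw [abs_of_nonneg (dpow_nonneg (fun μ => (hδ μ).1))]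
      refine dpow_le_one hδ (fun μ => ?_)
      simp only [Pi.sub_apply]
      linarith [hle j μ]
    have h2 : |md α (a j) y| ≤ C j := by
      rw [← Real.norm_eq_abs]
      exact hC j y (subset_closure hy)
    calc |dpow δ (d₀ - dY j)| * |md α (a j) y| ≤ 1 * C j := by
          apply mul_le_mul h1 h2 (abs_nonneg _) zero_le_one
      _ = C j := one_mul _
      _ ≤ |C j| := le_abs_self _
      _ ≤ ∑ i, |C i| := Finset.single_le_sum (fun i _ => abs_nonneg (C i))
            (Finset.mem_univ j)

end AuxHigh


/-- Let `S ⊂ Γ(TΩ) × ([0,∞)^ν \ {0})` be such that for every `M` the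
set `{(X,d) ∈ S : |d|_∞ ≤ M}` is finite, and suppose that for each `μ` the collection
`{X : (X,d) ∈ S, d_{μ'} = 0 ∀ μ' ≠ μ}` satisfies Hörmander's condition on `Ω`.  Then
`L(S)` is smoothly finitely generated on `Ω'`: there is a finite `F ⊆ L(S)` which smoothly
controls `L(S)` on `Ω'` and is smoothly controlled by `L(S)` on `Ω'`. -/
theorem stmt7 {n ν : ℕ} (Ω Ω' : Set (Pt n)) (hΩ : IsOpen Ω) (hΩ' : IsOpen Ω')
    (hcl : closure Ω' ⊆ Ω) (hcpt : IsCompact (closure Ω'))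
    (S : Set (VF n × (Fin ν → ℝ)))
    (hreg : ∀ p ∈ S, ContDiffOn ℝ (⊤ : ℕ∞) p.1 Ω ∧ (∀ μ, 0 ≤ p.2 μ) ∧ p.2 ≠ 0)
    (hfin : ∀ M : ℝ, {p ∈ S | ∀ μ, |p.2 μ| ≤ M}.Finite)
    (hHor : ∀ μ : Fin ν,
      Hormander {X : VF n | ∃ d, (X, d) ∈ S ∧ ∀ μ', μ' ≠ μ → d μ' = 0} Ω) :
    ∃ M : ℝ, ∃ F : Set (VF n × (Fin ν → ℝ)),
      F = {p ∈ LSet S | ∀ μ, |p.2 μ| ≤ M} ∧ F.Finite ∧ F ⊆ LSet S ∧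
      EquivSetsS F (LSet S) Ω' Ω := by
  classical
  have hsm : ∀ p ∈ S, ContDiffOn ℝ (⊤:ℕ∞) p.1 Ω := fun p hp => (hreg p hp).1
  have hnn : ∀ p ∈ S, ∀ μ, 0 ≤ p.2 μ := fun p hp => (hreg p hp).2.1
  have hne : ∀ p ∈ S, p.2 ≠ 0 := fun p hp => (hreg p hp).2.2
  have hfam := fun μ : Fin ν => exists_spanning_family hΩ hcl hcpt hsm μ (hHor μ)
  choose qq Y dd U hgen hsupp hUopen hclU hUΩ hspan using hfam
  set M : ℝ := ∑ μ : Fin ν, ∑ i : Fin (qq μ), ∑ μ' : Fin ν, |dd μ i μ'| with hM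
  have hMle : ∀ (μ : Fin ν) (i : Fin (qq μ)) (μ' : Fin ν), |dd μ i μ'| ≤ M := by
    intro μ i μ'
    calc |dd μ i μ'| ≤ ∑ μ'' : Fin ν, |dd μ i μ''| := by
          exact Finset.single_le_sum (f := fun μ'' : Fin ν => |dd μ i μ''|)
            (fun _ _ => abs_nonneg _) (Finset.mem_univ μ')
      _ ≤ ∑ i' : Fin (qq μ), ∑ μ'' : Fin ν, |dd μ i' μ''| := by
          exact Finset.single_le_sum
            (f := fun i' : Fin (qq μ) => ∑ μ'' : Fin ν, |dd μ i' μ''|)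
            (fun i' _ => Finset.sum_nonneg fun _ _ => abs_nonneg _)
            (Finset.mem_univ i)
      _ ≤ M := by
          exact Finset.single_le_sum
            (f := fun μ''' : Fin ν => ∑ i' : Fin (qq μ'''), ∑ μ'' : Fin ν, |dd μ''' i' μ''|)
            (fun μ''' _ => Finset.sum_nonneg fun _ _ => Finset.sum_nonneg
              fun _ _ => abs_nonneg _)
            (Finset.mem_univ μ)
  refine ⟨M, {p ∈ LSet S | ∀ μ, |p.2 μ| ≤ M}, rfl,
    lset_bounded_finite hnn hne hfin M, fun p hp => hp.1, ?_, ?_⟩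
  · -- F smoothly controls LSet S
    intro p hp
    by_cases hb : ∀ μ, |p.2 μ| ≤ M
    · exact ⟨1, fun _ => p.1, fun _ => p.2, fun _ => ⟨hp, hb⟩,
        smoothControlsPair_self hΩ hcl hcpt p⟩
    · push_neg at hb
      obtain ⟨μ, hμ⟩ := hb
      have hpnn : ∀ μ', 0 ≤ p.2 μ' := genLie_snd_nonneg hnn hp
      have hμ' : M < p.2 μ := by rwa [abs_of_nonneg (hpnn μ)] at hμ
      refine ⟨qq μ, Y μ, dd μ, fun i => ⟨hgen μ i, fun μ'' => hMle μ i μ''⟩, ?_⟩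
      have hYU : ∀ i, ContDiffOn ℝ (⊤:ℕ∞) (Y μ i) (U μ) :=
        fun i => (genLie_fst_smooth hΩ hsm (hgen μ i)).mono (hUΩ μ)
      have hXU : ContDiffOn ℝ (⊤:ℕ∞) p.1 (U μ) :=
        (genLie_fst_smooth hΩ hsm hp).mono (hUΩ μ)
      have hdnn : ∀ i μ'', 0 ≤ dd μ i μ'' :=
        fun i μ'' => genLie_snd_nonneg hnn (hgen μ i) μ''
      have hle : ∀ i μ'', dd μ i μ'' ≤ p.2 μ'' := by
        intro i μ''
        by_cases h : μ'' = μ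
        · rw [h]
          exact le_trans (le_trans (le_abs_self _) (hMle μ i μ)) hμ'.le
        · rw [hsupp μ i μ'' h]
          exact hpnn μ''
      exact smoothControls_high hΩ (hUopen μ) (hclU μ) (hUΩ μ) hcpt hYU (hspan μ)
        hXU hpnn hdnn hle
  · -- LSet S smoothly controls F
    rintro p ⟨hp, _⟩
    exact ⟨1, fun _ => p.1, fun _ => p.2, fun _ => hp,
      smoothControlsPair_self hΩ hcl hcpt p⟩

end
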